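/- Let A be a type with decidable equality, B a type, and T : Set (List (A × B)) downward prime. Then EMPCF(A, B, T) implies GDC(A, B, T). -/

import Mathlib

namespace Paper

universe u v

/-- `listSub u α` : every element of the list `u` belongs to `α` (written `u ⊂ α`). -/
def listSub {A : Type u} (u : List A) (α : Set A) : Prop := ∀ a ∈ u, a ∈ α

/-- `⟨T⟩` : the sets all of whose finite sublists are in `T`. -/
def eng {A : Type u} (T : Set (List A)) : Set (Set A) :=
  {α | ∀ l : List A, listSub l α → l ∈ T}

/-- `⟨T⟩∃` : the sets having some finite sublist in `T`. -/
def engE {A : Type u} (T : Set (List A)) : Set (Set A) :=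
  {α | ∃ l : List A, listSub l α ∧ l ∈ T}

/-- `û` : the set of elements of the list `u`. -/
def hat {A : Type u} (l : List A) : Set A := {a | a ∈ l}

/-- `⌊P⌋` : the lists whose set of elements is in `P`. -/
def res {A : Type u} (P : Set (Set A)) : Set (List A) := {l | hat l ∈ P}

/-- Domain of a decidable partial function. -/
def ddom {A : Type u} {B : Type v} (f : A → Option B) : Set A := {a | f a ≠ none}

/-- Graph of a decidable partial function. -/
def dgraph {A : Type u} {B : Type v} (f : A → Option B) : Set (A × B) :=
  {p | f p.1 = some p.2}

/-- `g ≺ f` for decidable partial functions: `g` extends `f` by one new point. -/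
def dext {A : Type u} {B : Type v} (g f : A → Option B) : Prop :=
  ∃ a, a ∉ ddom f ∧ ddom g = ddom f ∪ {a} ∧ ∀ x ∈ ddom f, f x = g x

/-- `f` is dpf-maximal in `P`. -/
def MaxDPF {A : Type u} {B : Type v} (P : Set (Set (A × B))) (f : A → Option B) : Prop :=
  dgraph f ∈ P ∧ ∀ g : A → Option B, dext g f → dgraph g ∉ P

/-- `EMPCF(A,B,T)` : existence of a maximal decidable partial choice function. -/
def EMPCF {A : Type u} {B : Type v} (T : Set (List (A × B))) : Prop :=
  (∃ α : Set (A × B), α ∈ eng T) → ∃ f : A → Option B, MaxDPF (eng T) f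

/-- The operator `φ` used to define `A`-`B`-approximability. -/
def phi {A : Type u} {B : Type v} (T X : Set (List (A × B))) : Set (List (A × B)) :=
  {l | l ∈ res (eng T) ∧ ∀ a : A, (¬ ∃ b, (a, b) ∈ l) → ∃ b, l ++ [(a, b)] ∈ X}

/-- `T` is `A`-`B`-approximable: `[]` is in the greatest fixed point of `φ`,
equivalently there is a `φ`-dense set containing `[]`. -/
def Approximable {A : Type u} {B : Type v} (T : Set (List (A × B))) : Prop :=
  ∃ X : Set (List (A × B)), X ⊆ phi T X ∧ [] ∈ X

/-- `T` has an `A`-`B`-choice function. -/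
def HasChoiceFun {A : Type u} {B : Type v} (T : Set (List (A × B))) : Prop :=
  ∃ f : A → B, ∀ l : List (A × B), listSub l {p : A × B | f p.1 = p.2} → l ∈ T

/-- Generalised dependent choice. -/
def GDC {A : Type u} {B : Type v} (T : Set (List (A × B))) : Prop :=
  Approximable T → HasChoiceFun T

/-- `T` is downward prime. -/
def DownwardPrime {A : Type u} {B : Type v} (T : Set (List (A × B))) : Prop :=
  ∀ l v : List (A × B), l ∈ T → v ∈ T → l ++ v ∈ T

/-- for `T` downward prime and `A` with decidable equality,
`EMPCF(A, B, T)` implies `GDC(A, B, T)`. -/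
theorem EMPCF_implies_GDC_downwardPrime (A : Type u) (B : Type v)
    [DecidableEq A] (T : Set (List (A × B))) (hT : DownwardPrime T) :
    EMPCF T → GDC T := by
  intro hE hApp
  obtain ⟨X, hX, hnil⟩ := hApp
  have hniT : ([] : List (A × B)) ∈ T := by
    have h := (hX hnil).1
    exact h [] (by intro a ha; exact absurd ha List.not_mem_nil)
  have hsingle : ∀ a : A, ∃ b : B, [(a, b)] ∈ T := by
    intro a
    obtain ⟨b, hb⟩ := (hX hnil).2 a (by simp)
    refine ⟨b, ?_⟩
    have h := (hX hb).1
    exact h [(a, b)] (fun p hp => hp)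
  have hengCrit : ∀ α : Set (A × B), (∀ p ∈ α, [p] ∈ T) → α ∈ eng T := by
    intro α hα l hl
    induction l with
    | nil => exact hniT
    | cons p l ih =>
      have h1 : [p] ∈ T := hα p (hl p List.mem_cons_self)
      have h2 : l ∈ T := ih (fun q hq => hl q (List.mem_cons_of_mem _ hq))
      exact hT [p] l h1 h2
  obtain ⟨f, hf, hmax⟩ := hE ⟨∅, hengCrit ∅ (by intro p hp; exact absurd hp (Set.notMem_empty p))⟩
  have htot : ∀ a, f a ≠ none := by
    intro a ha
    obtain ⟨b, hb⟩ := hsingle a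
    set g : A → Option B := fun x => if x = a then some b else f x with hg
    have hnf : a ∉ ddom f := fun h => h ha
    have hdext : dext g f := by
      refine ⟨a, hnf, ?_, ?_⟩
      · ext x
        by_cases hx : x = a
        · subst hx
          simp [ddom, hg]
        · simp [ddom, hg, hx]
      · intro x hx
        have hx' : x ≠ a := by rintro rfl; exact hnf hx
        simp [hg, hx']
    have hgeng : dgraph g ∈ eng T := by
      apply hengCrit
      intro p hp
      by_cases hp1 : p.1 = a
      · have : g p.1 = some b := by simp [hg, hp1]
        have hpb : p.2 = b := by
          have := hp.symm.trans this
          exact Option.some_injective _ this.symm |>.symm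
        have hpe : p = (a, b) := Prod.ext hp1 hpb
        rw [hpe]; exact hb
      · have : g p.1 = f p.1 := by simp [hg, hp1]
        have hpf : p ∈ dgraph f := by
          show f p.1 = some p.2
          rw [← this]; exact hp
        exact hf [p] (by intro q hq; rw [List.mem_singleton] at hq; subst hq; exact hpf)
    exact hmax g hdext hgeng
  refine ⟨fun a => (f a).get (Option.ne_none_iff_isSome.mp (htot a)), ?_⟩
  intro l hl
  apply hf l
  intro p hp
  show f p.1 = some p.2
  have h := hl p hp
  rw [← h]
  exact (Option.some_get _).symm

end Paper
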